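/- arXiv:2311.18772 — 2 statements merged into one kernel-verified Lean document; each statement's English description precedes it below -/
import Mathlib

section
/- If x is a P-position in Moore's nim(n, ≤k) (i.e., every column sum of the Bouton matrix is 0 mod k+1), then every move from x leads to a position having some column sum not congruent to 0 mod k+1. -/
/-- The `j`-th binary digit of `m`. -/
def digit (m j : ℕ) : ℕ := m / 2 ^ j % 2

/-- The `j`-th column sum of the Bouton matrix of a position. -/
def colSum {n : ℕ} (x : Fin n → ℕ) (j : ℕ) : ℕ := ∑ i, digit (x i) j

/-- A move of classical nim: strictly reduce exactly one pile. -/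
def NimMove {n : ℕ} (x y : Fin n → ℕ) : Prop :=
  ∃ i, y i < x i ∧ ∀ j, j ≠ i → y j = x j

/-- A move of Moore's nim(n, ≤k): strictly reduce at least one and at most `k` piles. -/
def MooreMove (k : ℕ) {n : ℕ} (x y : Fin n → ℕ) : Prop :=
  ∃ S : Finset (Fin n), S.Nonempty ∧ S.card ≤ k ∧ (∀ i ∈ S, y i < x i) ∧ ∀ i ∉ S, y i = x i

/-- A move of exact (n, k) nim: strictly reduce exactly `k` piles. -/
def ExactMove (k : ℕ) {n : ℕ} (x y : Fin n → ℕ) : Prop :=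
  ∃ S : Finset (Fin n), S.card = k ∧ (∀ i ∈ S, y i < x i) ∧ ∀ i ∉ S, y i = x i

/-- N-positions of an impartial game: there is a move to a position all of whose
moves lead to N-positions (i.e. a move to a P-position). -/
inductive NPos {α : Type*} (Move : α → α → Prop) : α → Prop where
  | intro {x y : α} (h : Move x y) (hy : ∀ z, Move y z → NPos Move z) : NPos Move x

/-- P-positions of an impartial game: every move leads to an N-position
(in particular, terminal positions are P-positions). -/
def PPos {α : Type*} (Move : α → α → Prop) (x : α) : Prop :=
  ∀ y, Move x y → NPos Move y

lemma digit_eq' (m j : ℕ) : digit m j = (m.testBit j).toNat := by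
  rw [digit, Nat.testBit_eq_decide_div_mod_eq]
  rcases Nat.mod_two_eq_zero_or_one (m / 2^j) with h | h <;> simp [h]

lemma exists_top_diff {a b : ℕ} (h : a < b) :
    ∃ d, a.testBit d = false ∧ b.testBit d = true ∧
      ∀ j, d < j → a.testBit j = b.testBit j := by
  have hne : a ^^^ b ≠ 0 := by
    intro h0
    exact absurd (xor_eq_zero_iff.mp h0) (by omega)
  obtain ⟨d, hd, hd'⟩ := Nat.exists_most_significant_bit hne
  have habove : ∀ j, d < j → a.testBit j = b.testBit j := by
    intro j hj
    have := hd' j hj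
    rw [Nat.testBit_xor] at this
    cases ha : a.testBit j <;> cases hb : b.testBit j <;> simp_all
  rw [Nat.testBit_xor] at hd
  have hdiff : a.testBit d ≠ b.testBit d := by
    intro e; rw [e] at hd; simp at hd
  cases ha : a.testBit d <;> cases hb : b.testBit d
  · exact absurd (ha.trans hb.symm) hdiff
  · exact ⟨d, ha, hb, habove⟩
  · exact absurd (Nat.lt_of_testBit d hb ha fun j hj => (habove j hj).symm) (by omega)
  · exact absurd (ha.trans hb.symm) hdiff

/-- any Moore move from a position with all column sums ≡ 0 mod k+1
leads to a position with some column sum ≢ 0 mod k+1. -/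
theorem moore_move_unbalances {n k : ℕ} (x y : Fin n → ℕ)
    (hx : ∀ j, colSum x j % (k + 1) = 0) (h : MooreMove k x y) :
    ∃ j, colSum y j % (k + 1) ≠ 0 := by
  obtain ⟨S, hSne, hScard, hdec, heq⟩ := h
  have hex : ∀ i ∈ S, ∃ d, (y i).testBit d = false ∧ (x i).testBit d = true ∧
      ∀ j, d < j → (y i).testBit j = (x i).testBit j := fun i hi => exists_top_diff (hdec i hi)
  choose! d hd1 hd2 hd3 using hex
  obtain ⟨i₀, hi₀, hmax⟩ := S.exists_max_image d hSne
  set J := d i₀ with hJ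
  -- pointwise inequality
  have hpt : ∀ i, digit (y i) J ≤ digit (x i) J := by
    intro i
    by_cases hi : i ∈ S
    · rcases lt_or_eq_of_le (hmax i hi) with hlt | heqd
      · rw [digit_eq', digit_eq', hd3 i hi J hlt]
      · rw [digit_eq', digit_eq', ← heqd, hd1 i hi, hd2 i hi]
        simp
    · rw [heq i hi]
  have hle : colSum y J ≤ colSum x J :=
    Finset.sum_le_sum fun i _ => hpt i
  have hlt : colSum y J < colSum x J := by
    apply Finset.sum_lt_sum (fun i _ => hpt i) ⟨i₀, Finset.mem_univ i₀, ?_⟩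
    rw [digit_eq', digit_eq', hd1 i₀ hi₀, hd2 i₀ hi₀]
    simp
  have hbound : colSum x J ≤ colSum y J + S.card := by
    have : ∀ i ∈ Finset.univ, digit (x i) J ≤ digit (y i) J + (if i ∈ S then 1 else 0) := by
      intro i _
      by_cases hi : i ∈ S
      · simp only [hi, if_pos]
        rw [digit_eq']
        cases (x i).testBit J <;> simp
      · rw [heq i hi]; simp
    calc colSum x J ≤ ∑ i, (digit (y i) J + (if i ∈ S then 1 else 0)) :=
          Finset.sum_le_sum this
      _ = colSum y J + S.card := by
          rw [Finset.sum_add_distrib]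
          congr 1
          simp [Finset.sum_ite_mem]
  set m := colSum x J - colSum y J with hm
  have hm1 : 1 ≤ m := by omega
  have hmk : m ≤ k := by omega
  refine ⟨J, fun hy0 => ?_⟩
  have hdx : (k + 1) ∣ colSum x J := Nat.dvd_of_mod_eq_zero (hx J)
  have hdy : (k + 1) ∣ colSum y J := Nat.dvd_of_mod_eq_zero hy0
  have : (k + 1) ∣ m := Nat.dvd_sub hdx hdy
  have := Nat.le_of_dvd (by omega) this
  omega
end

section
/- In the exact (4, 2) nim, a position (a, b, c, d) with a ≤ b ≤ c ≤ d is a P-position if and only if a = b = c (i.e., the three smallest piles are equal). -/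
/-- three smallest equal: there is a value m and an exceptional index j such that
all other coordinates equal m and coordinate j is ≥ m. -/
def Qp (x : Fin 4 → ℕ) : Prop := ∃ m j, m ≤ x j ∧ ∀ i, i ≠ j → x i = m

theorem npos_not_ppos {α : Type*} {M : α → α → Prop} {x : α} (h : NPos M x) :
    ¬ PPos M x := by
  induction h with
  | @intro x y hxy hy ih =>
    intro hp
    obtain ⟨hyz, hz⟩ := hp y hxy
    exact ih _ ‹_› hz

theorem move_sum_lt {x y : Fin 4 → ℕ} (h : ExactMove 2 x y) :
    ∑ i, y i < ∑ i, x i := by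
  obtain ⟨S, hcard, hlt, heq⟩ := h
  have hne : S.Nonempty := Finset.card_pos.mp (by omega)
  obtain ⟨s, hs⟩ := hne
  refine Finset.sum_lt_sum (fun i _ => ?_) ⟨s, Finset.mem_univ s, hlt s hs⟩
  by_cases hi : i ∈ S
  · exact (hlt i hi).le
  · exact (heq i hi).le

theorem lemA {x y : Fin 4 → ℕ} (hQ : Qp x) (hmv : ExactMove 2 x y) : ¬ Qp y := by
  obtain ⟨m, j, hj, hother⟩ := hQ
  obtain ⟨S, hcard, hlt, heq⟩ := hmv
  have hxge : ∀ i, m ≤ x i := by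
    intro i
    by_cases hij : i = j
    · subst hij; exact hj
    · exact (hother i hij).ge
  rintro ⟨m', j', hj', hother'⟩
  have hyge : ∀ i, m' ≤ y i := by
    intro i
    by_cases hij : i = j'
    · subst hij; exact hj'
    · exact (hother' i hij).ge
  -- find s ∈ S with s ≠ j
  obtain ⟨u, v, huv, hS⟩ := Finset.card_eq_two.mp hcard
  have hsmall : ∃ s ∈ S, s ≠ j := by
    by_cases hu : u = j
    · exact ⟨v, by simp [hS], fun h => huv (hu.trans h.symm)⟩
    · exact ⟨u, by simp [hS], hu⟩
  obtain ⟨s, hsS, hsj⟩ := hsmall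
  have hslt : y s < m := by
    have := hlt s hsS
    rwa [hother s hsj] at this
  -- complement of S has two elements
  have hccard : Sᶜ.card = 2 := by
    have := Finset.card_compl S
    simp [hcard] at this
    omega
  obtain ⟨p, q, hpq, hSc⟩ := Finset.card_eq_two.mp hccard
  have hp : p ∉ S := by
    have : p ∈ Sᶜ := by simp [hSc]
    simpa using this
  have hq : q ∉ S := by
    have : q ∈ Sᶜ := by simp [hSc]
    simpa using this
  have hyp : m ≤ y p := by rw [heq p hp]; exact hxge p
  have hyq : m ≤ y q := by rw [heq q hq]; exact hxge q
  have hm'm : m' < m := lt_of_le_of_lt (hyge s) hslt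
  have hpj' : p = j' := by
    by_contra h
    have := hother' p h
    omega
  have hqj' : q = j' := by
    by_contra h
    have := hother' q h
    omega
  exact hpq (hpj'.trans hqj'.symm)

theorem lemB {x : Fin 4 → ℕ} (hQ : ¬ Qp x) :
    ∃ y, ExactMove 2 x y ∧ Qp y := by
  obtain ⟨i0, -, hmin⟩ := Finset.exists_min_image Finset.univ x ⟨0, Finset.mem_univ 0⟩
  simp only [Finset.mem_univ, forall_true_left] at hmin
  set m := x i0 with hm
  set T : Finset (Fin 4) := Finset.univ.filter (fun i => m < x i) with hT
  have hT2 : 2 ≤ T.card := by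
    by_contra h
    push_neg at h
    apply hQ
    have h1 : T.card ≤ 1 := by omega
    obtain ⟨j, hj⟩ := Finset.card_le_one_iff_subset_singleton.mp h1
    refine ⟨m, j, hmin j, fun i hij => ?_⟩
    have hiT : i ∉ T := fun hi => hij (Finset.mem_singleton.mp (hj hi))
    simp [hT] at hiT
    have := hmin i
    omega
  obtain ⟨s, hsT, t, htT, hst⟩ := Finset.one_lt_card.mp hT2
  have hsx : m < x s := by simp [hT] at hsT; exact hsT
  have htx : m < x t := by simp [hT] at htT; exact htT
  have hi0s : i0 ≠ s := fun h => by rw [← h] at hsx; omega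
  have hi0t : i0 ≠ t := fun h => by rw [← h] at htx; omega
  set y : Fin 4 → ℕ := fun i => if i = s ∨ i = t then m else x i with hy
  have hmove : ExactMove 2 x y := by
    refine ⟨{s, t}, ?_, ?_, ?_⟩
    · rw [Finset.card_insert_of_notMem (by simpa using hst), Finset.card_singleton]
    · intro i hi
      simp only [Finset.mem_insert, Finset.mem_singleton] at hi
      rcases hi with h | h <;> subst h
      · simpa [hy] using hsx
      · simpa [hy] using htx
    · intro i hi
      simp only [Finset.mem_insert, Finset.mem_singleton] at hi
      push_neg at hi
      simp [hy, hi.1, hi.2]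
  -- the fourth index
  have hc3 : ({s, t, i0} : Finset (Fin 4)).card = 3 := by
    rw [Finset.card_insert_of_notMem (by simp [hst, Ne.symm hi0s]),
        Finset.card_insert_of_notMem (by simp [Ne.symm hi0t]), Finset.card_singleton]
  have hcc : ({s, t, i0} : Finset (Fin 4))ᶜ.card = 1 := by
    rw [Finset.card_compl, hc3, Fintype.card_fin]
  obtain ⟨j, hj⟩ := Finset.card_eq_one.mp hcc
  have hyi : ∀ i, i ≠ j → y i = m := by
    intro i hij
    have : i ∈ ({s, t, i0} : Finset (Fin 4)) := by
      by_contra h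
      have : i ∈ ({s, t, i0} : Finset (Fin 4))ᶜ := by simpa using h
      rw [hj] at this
      exact hij (Finset.mem_singleton.mp this)
    simp only [Finset.mem_insert, Finset.mem_singleton] at this
    rcases this with h | h | h <;> subst h <;> simp [hy, hi0s, hi0t, hm]
  have hyj : m ≤ y j := by
    simp only [hy]
    split
    · exact le_refl m
    · exact hmin j
  exact ⟨y, hmove, m, j, hyj, hyi⟩

theorem Q_ppos : ∀ s (x : Fin 4 → ℕ), (∑ i, x i) = s → Qp x → PPos (ExactMove 2) x := by
  intro s
  induction s using Nat.strong_induction_on with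
  | _ s ih =>
    intro x hs hQ y hxy
    have hny : ¬ Qp y := lemA hQ hxy
    obtain ⟨z, hyz, hQz⟩ := lemB hny
    refine NPos.intro hyz ?_
    have h1 : ∑ i, z i < s := by
      have := move_sum_lt hyz
      have := move_sum_lt hxy
      omega
    exact ih _ h1 z rfl hQz

theorem ppos_iff_Q (x : Fin 4 → ℕ) : PPos (ExactMove 2) x ↔ Qp x := by
  constructor
  · intro hp
    by_contra hQ
    obtain ⟨z, hxz, hQz⟩ := lemB hQ
    have hpz : PPos (ExactMove 2) z := Q_ppos _ z rfl hQz
    exact npos_not_ppos (hp z hxz) hpz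
  · intro hQ
    exact Q_ppos _ x rfl hQ

/-- P-positions of exact (4,2) nim are exactly the sorted positions
whose three smallest piles are equal. -/
theorem exact42_PPos_iff (a b c d : ℕ) (hab : a ≤ b) (hbc : b ≤ c) (hcd : c ≤ d) :
    PPos (ExactMove 2) ![a, b, c, d] ↔ (a = b ∧ b = c) := by
  rw [ppos_iff_Q]
  constructor
  · rintro ⟨m, j, hj, hother⟩
    fin_cases j
    · have hb : b = m := hother 1 (by decide)
      have hc : c = m := hother 2 (by decide)
      have ha : m ≤ a := hj
      omega
    · have ha : a = m := hother 0 (by decide)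
      have hc : c = m := hother 2 (by decide)
      have hb : m ≤ b := hj
      omega
    · have ha : a = m := hother 0 (by decide)
      have hb : b = m := hother 1 (by decide)
      have hd : d = m := hother 3 (by decide)
      have hc : m ≤ c := hj
      omega
    · have ha : a = m := hother 0 (by decide)
      have hb : b = m := hother 1 (by decide)
      have hc : c = m := hother 2 (by decide)
      omega
  · rintro ⟨h1, h2⟩
    refine ⟨a, 3, show a ≤ d by omega, fun i hi => ?_⟩
    fin_cases i
    · rfl
    · show b = a; omega
    · show c = a; omega
    · exact absurd rfl hi
end
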